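/- arXiv:1504.00196 — 2 statements merged into one kernel-verified Lean document; each statement's English description precedes it below -/
import Mathlib

section
/- Let N ≥ 1, let 0 < θ₁ < θ₂ < ⋯ < θ_N, Ω > 0, γ > 0, and a_ℓ > 0 for ℓ = 1,…,N. Define the polynomial Q(s) = s ∏_{ℓ=1}^N (θ_ℓ + Ω - s) + γ (s - Ω) ∑_{ℓ=1}^N a_ℓ ∏_{k≠ℓ} (θ_k + Ω - s). Then Q has exactly N+1 real roots s₁ < s₂ < ⋯ < s_{N+1}, all positive, and they interlace with the shifted abscissae: 0 < s₁ < θ₁ + Ω < s₂ < θ₂ + Ω < ⋯ < s_N < θ_N + Ω < s_{N+1}. -/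
open Finset Polynomial

lemma neg_one_pow_card_mul_prod_pos {α : Type*} (s : Finset α) (f : α → ℝ)
    (h : ∀ i ∈ s, f i < 0) : 0 < (-1 : ℝ) ^ s.card * ∏ i ∈ s, f i := by
  classical
  induction s using Finset.induction with
  | empty => simp
  | @insert x s' hx ih =>
    rw [Finset.card_insert_of_notMem hx, Finset.prod_insert hx, pow_succ]
    have h1 := h x (Finset.mem_insert_self _ _)
    have h2 := ih (fun i hi => h i (Finset.mem_insert_of_mem hi))
    nlinarith

lemma exists_root_Ioo {f : ℝ → ℝ} (hf : Continuous f) {p q : ℝ} (hpq : p < q)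
    (h : f p * f q < 0) : ∃ t ∈ Set.Ioo p q, f t = 0 := by
  rcases mul_neg_iff.mp h with ⟨h1, h2⟩ | ⟨h1, h2⟩
  · obtain ⟨t, ht, ht0⟩ := intermediate_value_Ioo' hpq.le hf.continuousOn
      (show (0:ℝ) ∈ Set.Ioo (f q) (f p) from ⟨h2, h1⟩)
    exact ⟨t, ht, ht0⟩
  · obtain ⟨t, ht, ht0⟩ := intermediate_value_Ioo hpq.le hf.continuousOn
      (show (0:ℝ) ∈ Set.Ioo (f p) (f q) from ⟨h1, h2⟩)
    exact ⟨t, ht, ht0⟩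

/-- The polynomial `Q(s)` arising from the characteristic polynomial of the
diffusive block of the Biot-DA relaxation matrix. -/
noncomputable def Qpoly (N : ℕ) (θ a : Fin N → ℝ) (γ Ω s : ℝ) : ℝ :=
  s * ∏ ℓ : Fin N, (θ ℓ + Ω - s) +
    γ * (s - Ω) * ∑ ℓ : Fin N, a ℓ * ∏ k ∈ Finset.univ.erase ℓ, (θ k + Ω - s)

theorem Qpoly_roots_interlace (N : ℕ) (hN : 1 ≤ N) (θ a : Fin N → ℝ)
    (hθpos : ∀ ℓ, 0 < θ ℓ) (hθmono : StrictMono θ)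
    (Ω γ : ℝ) (hΩ : 0 < Ω) (hγ : 0 < γ) (ha : ∀ ℓ, 0 < a ℓ) :
    ∃ s : Fin (N + 1) → ℝ, StrictMono s ∧
      (∀ i, 0 < s i) ∧
      (∀ i, Qpoly N θ a γ Ω (s i) = 0) ∧
      (∀ x : ℝ, Qpoly N θ a γ Ω x = 0 → ∃ i, x = s i) ∧
      (∀ i : Fin N, s i.castSucc < θ i + Ω ∧ θ i + Ω < s i.succ) := by
  classical
  set c : Fin N → ℝ := fun ℓ => θ ℓ + Ω with hc
  set Q : ℝ → ℝ := Qpoly N θ a γ Ω with hQdef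
  have hcpos : ∀ ℓ, 0 < c ℓ := fun ℓ => by have := hθpos ℓ; simp only [hc]; linarith
  have hcΩ : ∀ ℓ, Ω < c ℓ := fun ℓ => by have := hθpos ℓ; simp only [hc]; linarith
  have hcmono : StrictMono c := fun i j hij => by
    simp only [hc]; have := hθmono hij; linarith
  -- the polynomial P with eval = Q
  set P : ℝ[X] := X * ∏ ℓ : Fin N, (C (c ℓ) - X) +
      C γ * (X - C Ω) * ∑ ℓ : Fin N, C (a ℓ) * ∏ k ∈ Finset.univ.erase ℓ, (C (c k) - X)
      with hP
  have hevalP : ∀ s : ℝ, P.eval s = Q s := by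
    intro s
    simp [hP, hQdef, Qpoly, eval_prod, eval_finset_sum, hc]
  -- degree facts
  have hM0monic : (∏ ℓ : Fin N, (X - C (c ℓ))).Monic :=
    monic_prod_of_monic _ _ fun ℓ _ => monic_X_sub_C _
  have hM0deg : (∏ ℓ : Fin N, (X - C (c ℓ))).natDegree = N := by
    rw [natDegree_prod_of_monic _ _ fun ℓ _ => monic_X_sub_C _]
    simp [natDegree_X_sub_C]
  have hflip : (∏ ℓ : Fin N, (C (c ℓ) - X)) = C ((-1:ℝ)^N) * ∏ ℓ : Fin N, (X - C (c ℓ)) := by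
    have h1 : ∀ ℓ : Fin N, C (c ℓ) - X = (-1) * (X - C (c ℓ)) := fun ℓ => by ring
    rw [Finset.prod_congr rfl fun ℓ _ => h1 ℓ, Finset.prod_mul_distrib, Finset.prod_const,
      card_univ, Fintype.card_fin]
    congr 1
    simp [map_pow]
  have hdeg1 : ∀ r : ℝ, (C r - X).natDegree = 1 := fun r => by
    rw [show C r - X = -(X - C r) by ring, natDegree_neg, natDegree_X_sub_C]
  have hT := C γ * (X - C Ω) * ∑ ℓ : Fin N, C (a ℓ) * ∏ k ∈ Finset.univ.erase ℓ, (C (c k) - X)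
  have hTdeg : (C γ * (X - C Ω) *
      ∑ ℓ : Fin N, C (a ℓ) * ∏ k ∈ Finset.univ.erase ℓ, (C (c k) - X)).natDegree ≤ N := by
    refine le_trans natDegree_mul_le ?_
    have hA : (C γ * (X - C Ω)).natDegree ≤ 1 := by
      refine le_trans natDegree_mul_le ?_
      simp [natDegree_X_sub_C]
    have hB : (∑ ℓ : Fin N, C (a ℓ) *
        ∏ k ∈ Finset.univ.erase ℓ, (C (c k) - X)).natDegree ≤ N - 1 := by
      refine natDegree_sum_le_of_forall_le _ _ fun ℓ _ => ?_
      refine le_trans natDegree_mul_le ?_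
      have := Polynomial.natDegree_prod_le (Finset.univ.erase ℓ)
        (fun k => C (c k) - X)
      simp only [natDegree_C, zero_add]
      refine le_trans this ?_
      refine le_of_eq ?_
      calc ∑ k ∈ Finset.univ.erase ℓ, (C (c k) - X).natDegree
          = ∑ k ∈ Finset.univ.erase ℓ, 1 := Finset.sum_congr rfl fun k _ => hdeg1 _
        _ = (Finset.univ.erase ℓ).card := by simp
        _ = N - 1 := by rw [Finset.card_erase_of_mem (mem_univ _), card_univ, Fintype.card_fin]
    omega
  have hcoN : (∏ ℓ : Fin N, (X - C (c ℓ))).coeff N = 1 := by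
    have h := hM0monic.coeff_natDegree
    rwa [hM0deg] at h
  have hcoeffP : P.coeff (N+1) = (-1:ℝ)^N := by
    rw [hP, coeff_add, coeff_eq_zero_of_natDegree_lt (lt_of_le_of_lt hTdeg (by omega)),
      add_zero, coeff_X_mul, hflip, coeff_C_mul, hcoN, mul_one]
  have hPne : P ≠ 0 := fun h => by
    rw [h, coeff_zero] at hcoeffP
    have := pow_ne_zero N (show (-1:ℝ) ≠ 0 by norm_num)
    exact this hcoeffP.symm
  have hPdegle : P.natDegree ≤ N + 1 := by
    rw [hP]
    refine le_trans (natDegree_add_le _ _) ?_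
    refine max_le ?_ (hTdeg.trans (by omega))
    refine le_trans natDegree_mul_le ?_
    have : (∏ ℓ : Fin N, (C (c ℓ) - X)).natDegree ≤ N := by
      refine le_trans (Polynomial.natDegree_prod_le _ _) (le_of_eq ?_)
      calc ∑ ℓ : Fin N, (C (c ℓ) - X).natDegree = ∑ ℓ : Fin N, 1 :=
            Finset.sum_congr rfl fun ℓ _ => hdeg1 _
        _ = N := by simp
    simp only [natDegree_X]
    omega
  have hPdeg : P.natDegree = N + 1 := by
    refine le_antisymm hPdegle (le_natDegree_of_ne_zero ?_)
    rw [hcoeffP]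
    exact pow_ne_zero N (by norm_num)
  have hPlead : P.leadingCoeff = (-1:ℝ)^N := by
    rw [Polynomial.leadingCoeff, hPdeg, hcoeffP]
  -- sign at 0
  have hQ0 : Q 0 < 0 := by
    have hS : 0 < ∑ ℓ : Fin N, a ℓ * ∏ k ∈ Finset.univ.erase ℓ, (θ k + Ω - 0) := by
      refine Finset.sum_pos (fun ℓ _ => mul_pos (ha ℓ) (Finset.prod_pos fun k _ => by
        have := hθpos k; linarith)) ?_
      exact Finset.univ_nonempty_iff.mpr ⟨⟨0, hN⟩⟩
    have he : Q 0 = 0 * ∏ ℓ : Fin N, (θ ℓ + Ω - 0) +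
        γ * (0 - Ω) * ∑ ℓ : Fin N, a ℓ * ∏ k ∈ Finset.univ.erase ℓ, (θ k + Ω - 0) := rfl
    rw [he]
    nlinarith [mul_pos (mul_pos hγ hΩ) hS]
  -- sign at c ℓ
  have hQc : ∀ ℓ : Fin N, 0 < (-1:ℝ)^ℓ.val * Q (c ℓ) := by
    intro ℓ
    have he : Q (c ℓ) = γ * (c ℓ - Ω) * (a ℓ * ∏ k ∈ Finset.univ.erase ℓ, (c k - c ℓ)) := by
      have h1 : ∏ k : Fin N, (θ k + Ω - c ℓ) = 0 :=
        Finset.prod_eq_zero (mem_univ ℓ) (by simp [hc])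
      have h2 : ∑ m : Fin N, a m * ∏ k ∈ Finset.univ.erase m, (θ k + Ω - c ℓ) =
          a ℓ * ∏ k ∈ Finset.univ.erase ℓ, (θ k + Ω - c ℓ) := by
        refine Finset.sum_eq_single ℓ (fun m _ hm => ?_) (by simp)
        rw [Finset.prod_eq_zero (Finset.mem_erase.mpr ⟨(Ne.symm hm), mem_univ ℓ⟩)
          (by simp [hc]), mul_zero]
      have he0 : Q (c ℓ) = (c ℓ) * ∏ k : Fin N, (θ k + Ω - c ℓ) +
          γ * (c ℓ - Ω) * ∑ m : Fin N, a m * ∏ k ∈ Finset.univ.erase m, (θ k + Ω - c ℓ) := rfl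
      rw [he0, h1, h2, mul_zero, zero_add]
    -- sign of the erase product
    have hfilter : (Finset.univ.erase ℓ).filter (fun k => k < ℓ) = Finset.Iio ℓ := by
      ext k
      simp only [Finset.mem_filter, Finset.mem_erase, Finset.mem_univ, and_true,
        Finset.mem_Iio, true_and]
      exact ⟨fun h => h.2, fun h => ⟨h.ne, h⟩⟩
    have hsplit := Finset.prod_filter_mul_prod_filter_not (Finset.univ.erase ℓ)
      (fun k => k < ℓ) (fun k => c k - c ℓ)
    have h1 := neg_one_pow_card_mul_prod_pos (Finset.Iio ℓ) (fun k => c k - c ℓ)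
      (fun k hk => sub_neg.mpr (hcmono (Finset.mem_Iio.mp hk)))
    have hpos : 0 < ∏ k ∈ (Finset.univ.erase ℓ).filter (fun k => ¬ k < ℓ),
        (c k - c ℓ) := by
      refine Finset.prod_pos fun k hk => ?_
      rw [Finset.mem_filter, Finset.mem_erase] at hk
      have : ℓ < k := lt_of_le_of_ne (not_lt.mp hk.2) (Ne.symm hk.1.1)
      exact sub_pos.mpr (hcmono this)
    have hprodsign : 0 < (-1:ℝ)^ℓ.val * ∏ k ∈ Finset.univ.erase ℓ, (c k - c ℓ) := by
      have heq : (-1:ℝ)^ℓ.val * ∏ k ∈ Finset.univ.erase ℓ, (c k - c ℓ) =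
          ((-1:ℝ)^(Finset.Iio ℓ).card * ∏ k ∈ Finset.Iio ℓ, (c k - c ℓ)) *
          ∏ k ∈ (Finset.univ.erase ℓ).filter (fun k => ¬ k < ℓ), (c k - c ℓ) := by
        rw [← hsplit, hfilter, Fin.card_Iio]
        ring
      rw [heq]
      exact mul_pos h1 hpos
    have heq2 : (-1:ℝ)^ℓ.val * Q (c ℓ) = (γ * (c ℓ - Ω) * a ℓ) *
        ((-1:ℝ)^ℓ.val * ∏ k ∈ Finset.univ.erase ℓ, (c k - c ℓ)) := by
      rw [he]; ring
    rw [heq2]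
    exact mul_pos (mul_pos (mul_pos hγ (sub_pos.mpr (hcΩ ℓ))) (ha ℓ)) hprodsign
  -- behavior at infinity
  obtain ⟨M, hMgt, hMsign⟩ :
      ∃ M : ℝ, c ⟨N - 1, by omega⟩ < M ∧ 0 < (-1:ℝ)^N * Q M := by
    set R : ℝ[X] := C ((-1:ℝ)^N) * P with hR
    have hCne : ((-1:ℝ)^N) ≠ 0 := pow_ne_zero _ (by norm_num)
    have hRne : R ≠ 0 := mul_ne_zero (by simpa using hCne) hPne
    have hRlead : R.leadingCoeff = 1 := by
      rw [hR, leadingCoeff_mul, leadingCoeff_C, hPlead, ← pow_add]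
      exact Even.neg_one_pow ⟨N, rfl⟩
    have hRnatdeg : R.natDegree = N + 1 := by
      rw [hR, natDegree_C_mul hCne, hPdeg]
    have hRdegpos : 0 < R.degree := by
      rw [← natDegree_pos_iff_degree_pos, hRnatdeg]; omega
    have htend := R.tendsto_atTop_of_leadingCoeff_nonneg hRdegpos (by rw [hRlead]; norm_num)
    have hev : ∀ᶠ (x : ℝ) in Filter.atTop, 0 < R.eval x := htend.eventually_gt_atTop 0
    obtain ⟨M0, hM0⟩ := Filter.eventually_atTop.mp hev
    refine ⟨max M0 (c ⟨N - 1, by omega⟩ + 1), ?_, ?_⟩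
    · exact lt_of_lt_of_le (lt_add_one _) (le_max_right _ _)
    · have := hM0 (max M0 (c ⟨N - 1, by omega⟩ + 1)) (le_max_left _ _)
      simp only [hR, eval_mul, eval_C, hevalP] at this
      exact this
  have hM0pos : 0 < M := lt_trans (hcpos _) hMgt
  -- the grid
  set x : ℕ → ℝ := fun j => if j = 0 then 0 else if h : j ≤ N then c ⟨j - 1, by omega⟩ else M
    with hx
  have hx0 : ∀ j, 0 ≤ x j := by
    intro j
    simp only [hx]
    split
    · exact le_refl 0
    · split
      · exact (hcpos _).le
      · exact hM0pos.le
  have hx00 : x 0 = 0 := by simp [hx]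
  have hxc : ∀ (m : ℕ) (h : m < N), x (m+1) = c ⟨m, h⟩ := by
    intro m h
    simp only [hx]
    rw [if_neg (Nat.succ_ne_zero m), dif_pos (by omega)]
    rfl
  have hxM : ∀ j, N < j → x j = M := by
    intro j hj
    simp only [hx]
    rw [if_neg (by omega), dif_neg (by omega)]
  have hxmono : ∀ j, j ≤ N → x j < x (j+1) := by
    intro j hj
    rcases Nat.eq_zero_or_pos j with rfl | hj1
    · rw [hx00, hxc 0 (by omega)]
      exact hcpos _
    · obtain ⟨m, rfl⟩ : ∃ m, j = m + 1 := ⟨j - 1, by omega⟩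
      rw [hxc m (by omega)]
      by_cases hjN : m + 1 < N
      · rw [hxc (m+1) hjN]
        exact hcmono (by simp only [Fin.mk_lt_mk]; omega)
      · have hm : m + 1 = N := by omega
        rw [hxM (m+1+1) (by omega)]
        have hidx : (⟨m, by omega⟩ : Fin N) = ⟨N - 1, by omega⟩ := by
          simp only [Fin.mk.injEq]; omega
        rw [hidx]
        exact hMgt
  have hsign : ∀ j, j ≤ N + 1 → (-1:ℝ)^j * Q (x j) < 0 := by
    intro j hj
    by_cases hj0 : j = 0
    · subst hj0
      simp only [hx, if_pos rfl, pow_zero, one_mul] at *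
      simpa using hQ0
    · by_cases hjN : j ≤ N
      · obtain ⟨m, rfl⟩ : ∃ m, j = m + 1 := ⟨j - 1, by omega⟩
        have hxm : x (m+1) = c ⟨m, by omega⟩ := hxc m (by omega)
        have := hQc ⟨m, by omega⟩
        rw [hxm, pow_succ]
        nlinarith
      · have hjeq : j = N + 1 := by omega
        subst hjeq
        rw [hxM (N+1) (by omega), pow_succ]
        nlinarith
  have hcont : Continuous Q := by
    have : Q = fun s => P.eval s := funext fun s => (hevalP s).symm
    rw [this]
    exact P.continuous
  have hroot : ∀ j : ℕ, j ≤ N → ∃ t ∈ Set.Ioo (x j) (x (j+1)), Q t = 0 := by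
    intro j hj
    refine exists_root_Ioo hcont (hxmono j hj) ?_
    have h1 := hsign j (by omega)
    have h2 := hsign (j+1) (by omega)
    rw [pow_succ] at h2
    rcases Nat.even_or_odd j with h | h
    · rw [h.neg_one_pow] at h1 h2; nlinarith
    · rw [h.neg_one_pow] at h1 h2; nlinarith
  set s : Fin (N+1) → ℝ := fun i => (hroot i.val (Nat.lt_succ_iff.mp i.isLt)).choose with hsdef
  have hs : ∀ i : Fin (N+1), s i ∈ Set.Ioo (x i.val) (x (i.val+1)) ∧ Q (s i) = 0 := by
    intro i
    obtain ⟨h1, h2⟩ := (hroot i.val (Nat.lt_succ_iff.mp i.isLt)).choose_spec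
    exact ⟨h1, h2⟩
  have hsmono : StrictMono s := by
    rw [Fin.strictMono_iff_lt_succ]
    intro i
    have h1 := (hs i.castSucc).1
    have h2 := (hs i.succ).1
    simp only [Fin.coe_castSucc, Fin.val_succ] at h1 h2
    exact lt_trans h1.2 h2.1
  refine ⟨s, hsmono, ?_, fun i => (hs i).2, ?_, ?_⟩
  · exact fun i => lt_of_le_of_lt (hx0 i.val) (hs i).1.1
  · -- completeness
    intro t ht
    by_contra hne
    push_neg at hne
    have hinj : Function.Injective s := hsmono.injective
    set F : Finset ℝ := insert t (Finset.image s Finset.univ) with hF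
    have hnotmem : t ∉ Finset.image s Finset.univ := by
      simp only [Finset.mem_image, Finset.mem_univ, true_and, not_exists]
      exact fun i h => hne i h.symm
    have hcard : F.card = N + 2 := by
      rw [hF, Finset.card_insert_of_notMem hnotmem,
        Finset.card_image_of_injective _ hinj, card_univ, Fintype.card_fin]
    have hsub : F ⊆ P.roots.toFinset := by
      intro y hy
      rw [Multiset.mem_toFinset, mem_roots hPne]
      rw [hF, Finset.mem_insert] at hy
      rcases hy with rfl | hy
      · show P.eval y = 0
        rw [hevalP]; exact ht
      · obtain ⟨i, _, rfl⟩ := Finset.mem_image.mp hy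
        show P.eval (s i) = 0
        rw [hevalP]; exact (hs i).2
    have hle := (Finset.card_le_card hsub).trans
      ((Multiset.toFinset_card_le _).trans P.card_roots')
    rw [hcard, hPdeg] at hle
    omega
  · -- interlacing
    intro i
    have hxe : x (i.val + 1) = θ i + Ω := by
      rw [hxc i.val i.isLt]
    have h1 := (hs i.castSucc).1
    have h2 := (hs i.succ).1
    simp only [Fin.coe_castSucc, Fin.val_succ] at h1 h2
    rw [hxe] at h1 h2
    exact ⟨h1.2, h2.1⟩
end

section
/- Let N ≥ 1, θ_ℓ > 0, a_ℓ > 0 for ℓ = 1,…,N, Ω₁, Ω₃ > 0, γ₁, γ₃ > 0, ρ > ρ_f > 0. Then zero is an eigenvalue of multiplicity exactly 6 of the (2N+8)×(2N+8) Biot-DA diffusive matrix S (as defined in the paper with blocks S₁, S₂, S₃), and all nonzero eigenvalues of S are real and positive. -/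
open Matrix Polynomial

section BiotDA

variable (N : ℕ)

/-- Index of the `ℓ`-th pair in the memory-variable block: even indices `2ℓ` carry the
`x`-direction (`i = 1`) memory variables, odd indices `2ℓ+1` the `z`-direction (`i = 3`) ones. -/
def pairIdx (j : Fin (2 * N)) : Fin N := ⟨j.val / 2, by omega⟩

/-- Block `S₁` (4 × 2N) of the Biot-DA diffusive matrix. -/
noncomputable def S1blk (ρ ρf γ1 γ3 : ℝ) (a1 a3 : Fin N → ℝ) :
    Matrix (Fin 4) (Fin (2 * N)) ℝ := fun i j =>
  if j.val % 2 = 0 then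
    if i = 0 then -(ρf / ρ) * γ1 * a1 (pairIdx N j)
    else if i = 2 then γ1 * a1 (pairIdx N j) else 0
  else
    if i = 1 then -(ρf / ρ) * γ3 * a3 (pairIdx N j)
    else if i = 3 then γ3 * a3 (pairIdx N j) else 0

/-- Block `S₂` (2N × 2N) of the Biot-DA diffusive matrix. -/
noncomputable def S2blk (γ1 γ3 Ω1 Ω3 : ℝ) (θ1 θ3 a1 a3 : Fin N → ℝ) :
    Matrix (Fin (2 * N)) (Fin (2 * N)) ℝ := fun j k =>
  (if j.val % 2 = k.val % 2 then
      (if k.val % 2 = 0 then γ1 * a1 (pairIdx N k) else γ3 * a3 (pairIdx N k))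
    else 0) +
  (if j = k then
      (if j.val % 2 = 0 then θ1 (pairIdx N j) + Ω1 else θ3 (pairIdx N j) + Ω3)
    else 0)

/-- Block `S₃` (2N × 4) of the Biot-DA diffusive matrix. -/
noncomputable def S3blk (Ω1 Ω3 : ℝ) : Matrix (Fin (2 * N)) (Fin 4) ℝ := fun j i =>
  if j.val % 2 = 0 ∧ i = 2 then -Ω1
  else if j.val % 2 = 1 ∧ i = 3 then -Ω3 else 0

/-- The `(2N+8) × (2N+8)` Biot-DA diffusive matrix `S`, indexed by
`(v_{s1}, v_{s3}, w₁, w₃) ⊕ (σ₁₁, σ₁₃, σ₃₃, p) ⊕ (memory variables)`. -/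
noncomputable def SBiotDA (ρ ρf γ1 γ3 Ω1 Ω3 : ℝ) (θ1 θ3 a1 a3 : Fin N → ℝ) :
    Matrix (Fin 4 ⊕ Fin 4 ⊕ Fin (2 * N)) (Fin 4 ⊕ Fin 4 ⊕ Fin (2 * N)) ℝ :=
  fun p q =>
    match p, q with
    | .inl i, .inr (.inr j) => S1blk N ρ ρf γ1 γ3 a1 a3 i j
    | .inr (.inr j), .inl i => S3blk N Ω1 Ω3 j i
    | .inr (.inr j), .inr (.inr k) => S2blk N γ1 γ3 Ω1 Ω3 θ1 θ3 a1 a3 j k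
    | _, _ => 0

end BiotDA


lemma isRoot_charpoly_iff {n : Type*} [Fintype n] [DecidableEq n] (M : Matrix n n ℂ) (z : ℂ) :
    M.charpoly.IsRoot z ↔ ∃ v, v ≠ 0 ∧ M.mulVec v = z • v := by
  have h1 : (charmatrix M).map (Polynomial.eval z) = z • 1 - M := by
    ext i j
    by_cases h : i = j <;>
      simp [charmatrix_apply, Matrix.diagonal, h, Matrix.one_apply, Matrix.smul_apply]
  have h2 := RingHom.map_det (Polynomial.evalRingHom z) (charmatrix M)
  rw [RingHom.mapMatrix_apply] at h2
  have hev : Polynomial.eval z M.charpoly = (z • 1 - M).det := by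
    rw [Matrix.charpoly, ← h1]
    simpa using h2
  have h3 : M.charpoly.IsRoot z ↔ (z • (1 : Matrix n n ℂ) - M).det = 0 := by
    rw [Polynomial.IsRoot, hev]
  rw [h3, ← Matrix.exists_mulVec_eq_zero_iff]
  constructor
  · rintro ⟨v, hv, hveq⟩
    refine ⟨v, hv, ?_⟩
    rw [Matrix.sub_mulVec, Matrix.smul_mulVec, Matrix.one_mulVec, sub_eq_zero] at hveq
    exact hveq.symm
  · rintro ⟨v, hv, hveq⟩
    refine ⟨v, hv, ?_⟩
    rw [Matrix.sub_mulVec, Matrix.smul_mulVec, Matrix.one_mulVec, sub_eq_zero]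
    exact hveq.symm


noncomputable def AcoreC (N : ℕ) (Ω : ℝ) (c τ : Fin N → ℝ) :
    Matrix (Unit ⊕ Fin N) (Unit ⊕ Fin N) ℂ := fun p q =>
  match p, q with
  | .inl _, .inl _ => 0
  | .inl _, .inr k => (c k : ℂ)
  | .inr _, .inl _ => (-Ω : ℝ)
  | .inr l, .inr k => (c k : ℂ) + if l = k then (τ l : ℂ) else 0

lemma AcoreC_eig {N : ℕ} (hN : 1 ≤ N) (Ω : ℝ) (c τ : Fin N → ℝ) (hΩ : 0 < Ω)
    (hc : ∀ l, 0 < c l) (hτ : ∀ l, Ω < τ l) (z : ℂ) (v : Unit ⊕ Fin N → ℂ)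
    (hv : v ≠ 0) (heig : (AcoreC N Ω c τ).mulVec v = z • v) :
    ∃ x : ℝ, 0 < x ∧ z = (x : ℂ) := by
  have hτ0 : ∀ l, 0 < τ l := fun l => lt_trans hΩ (hτ l)
  set u : ℂ := v (Sum.inl ()) with hu
  set y : Fin N → ℂ := fun l => v (Sum.inr l) with hy
  set s : ℂ := ∑ l, (c l : ℂ) * y l with hs
  have E1 : s = z * u := by
    have h := congrFun heig (Sum.inl ())
    simpa [Matrix.mulVec, dotProduct, Fintype.sum_sum_type, AcoreC, hs] using h
  have E2 : ∀ l, -(Ω : ℂ) * u + (s + (τ l : ℂ) * y l) = z * y l := by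
    intro l
    have h := congrFun heig (Sum.inr l)
    simpa [Matrix.mulVec, dotProduct, Fintype.sum_sum_type, AcoreC, hs,
      add_mul, Finset.sum_add_distrib, Finset.sum_ite_eq, mul_comm] using h
  by_cases hmem : ∃ l, z = ((τ l : ℝ) : ℂ)
  · obtain ⟨l, hl⟩ := hmem
    exact ⟨τ l, hτ0 l, hl⟩
  push_neg at hmem
  have hne : ∀ l, ((τ l : ℂ) - z) ≠ 0 := by
    intro l h
    exact hmem l (by linear_combination -h)
  have hyl : ∀ l, y l = ((Ω : ℂ) * u - s) / ((τ l : ℂ) - z) := by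
    intro l
    rw [eq_div_iff (hne l)]
    linear_combination E2 l
  have hvz : ¬ (u = 0 ∧ ∀ l, y l = 0) := by
    rintro ⟨h1, h2⟩
    apply hv
    funext p
    rcases p with _ | l
    · exact h1
    · exact h2 l
  by_cases hz0 : z = 0
  · exfalso
    subst hz0
    have hs0 : s = 0 := by rw [E1]; ring
    have hT0 : (0 : ℝ) < ∑ l, c l / τ l := by
      apply Finset.sum_pos
      · intro l _
        exact div_pos (hc l) (hτ0 l)
      · exact Finset.univ_nonempty_iff.mpr (Fin.pos_iff_nonempty.mp (by omega))
    have hkey : (Ω : ℂ) * u * ((∑ l, c l / τ l : ℝ) : ℂ) = 0 := by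
      have h0 : s = ∑ l, (c l : ℂ) * (((Ω : ℂ) * u - s) / ((τ l : ℂ) - 0)) :=
        by rw [hs]; exact Finset.sum_congr rfl fun l _ => by rw [← hyl l]
      rw [hs0] at h0
      push_cast
      calc (Ω : ℂ) * u * ∑ l, (c l : ℂ) / (τ l : ℂ)
          = ∑ l, (c l : ℂ) * (((Ω : ℂ) * u - 0) / ((τ l : ℂ) - 0)) := by
            rw [Finset.mul_sum]
            refine Finset.sum_congr rfl fun l _ => ?_
            have h1 := hne l
            have h2 : ((τ l : ℂ)) ≠ 0 := by simpa using h1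
            field_simp
            ring
        _ = 0 := h0.symm
    have hu0 : u = 0 := by
      rcases mul_eq_zero.mp hkey with h | h
      · rcases mul_eq_zero.mp h with h' | h'
        · exact absurd h' (by exact_mod_cast hΩ.ne')
        · exact h'
      · exact absurd h (by exact_mod_cast hT0.ne')
    exact hvz ⟨hu0, fun l => by rw [hyl l, hu0, hs0]; simp⟩
  · by_cases hsz : s = 0
    · exfalso
      have hu0 : u = 0 := by
        have h := E1; rw [hsz] at h
        exact (mul_eq_zero.mp h.symm).resolve_left hz0
      exact hvz ⟨hu0, fun l => by rw [hyl l, hu0, hsz]; simp⟩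
    set T : ℂ := ∑ l, (c l : ℂ) / ((τ l : ℂ) - z) with hT
    have h1 : s = ((Ω : ℂ) * u - s) * T := by
      rw [hT, Finset.mul_sum, hs]
      refine Finset.sum_congr rfl fun l _ => ?_
      rw [show ((c l : ℂ) * y l) = (c l : ℂ) * (((Ω : ℂ) * u - s) / ((τ l : ℂ) - z)) by
        rw [← hyl l]]
      rw [← hs]
      ring
    have key : z = ((Ω : ℂ) - z) * T := by
      have key2 : s * z = s * (((Ω : ℂ) - z) * T) := by
        linear_combination z * h1 - (Ω : ℂ) * T * E1
      exact mul_left_cancel₀ hsz key2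
    -- real / imaginary analysis
    set n : Fin N → ℝ := fun l => Complex.normSq ((τ l : ℂ) - z) with hn
    have hnpos : ∀ l, 0 < n l := fun l => Complex.normSq_pos.mpr (hne l)
    set P : ℝ := ∑ l, c l / n l with hP
    set R : ℝ := ∑ l, c l * (τ l - z.re) / n l with hR
    have hTre : T.re = R := by
      rw [hT, Complex.re_sum, hR]
      refine Finset.sum_congr rfl fun l _ => ?_
      rw [Complex.div_re]
      simp [Complex.sub_re, Complex.sub_im, hn]
    have hTim : T.im = z.im * P := by
      rw [hT, Complex.im_sum, hP, Finset.mul_sum]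
      refine Finset.sum_congr rfl fun l _ => ?_
      rw [Complex.div_im]
      simp [Complex.sub_re, Complex.sub_im, hn]
      ring
    have hdiff : R - (Ω - z.re) * P = ∑ l, c l * (τ l - Ω) / n l := by
      rw [hR, hP, Finset.mul_sum, ← Finset.sum_sub_distrib]
      refine Finset.sum_congr rfl fun l _ => ?_
      have := (hnpos l).ne'
      field_simp
      ring
    have hdpos : 0 ≤ R - (Ω - z.re) * P := by
      rw [hdiff]
      apply Finset.sum_nonneg
      intro l _
      exact div_nonneg (by nlinarith [hc l, hτ l]) (le_of_lt (hnpos l))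
    have keyIm := congrArg Complex.im key
    rw [Complex.mul_im, Complex.sub_re, Complex.sub_im, Complex.ofReal_re,
      Complex.ofReal_im, hTre, hTim] at keyIm
    have hfac : z.im * (1 - (Ω - z.re) * P + R) = 0 := by linear_combination keyIm
    have hb0 : z.im = 0 := by
      rcases mul_eq_zero.mp hfac with h | h
      · exact h
      · exfalso; nlinarith
    have hzx : z = ((z.re : ℝ) : ℂ) := Complex.ext (by simp) (by simp [hb0])
    have keyRe := congrArg Complex.re key
    rw [Complex.mul_re, Complex.sub_re, Complex.sub_im, Complex.ofReal_re,
      Complex.ofReal_im, hTre, hTim, hb0] at keyRe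
    simp only [mul_zero, zero_mul, sub_zero, zero_sub, neg_zero, mul_neg, neg_mul, sub_neg_eq_add, add_zero] at keyRe
    -- keyRe : z.re = (Ω - z.re) * R (up to arrangement)
    refine ⟨z.re, ?_, hzx⟩
    by_contra hxneg
    push_neg at hxneg
    have hRpos : 0 < R := by
      rw [hR]
      apply Finset.sum_pos
      · intro l _
        have h1 := hτ0 l
        have h2 := hnpos l
        have h3 := hc l
        have h4 : 0 < τ l - z.re := by linarith
        positivity
      · exact Finset.univ_nonempty_iff.mpr (Fin.pos_iff_nonempty.mp (by omega))
    nlinarith [keyRe, mul_pos (show (0:ℝ) < Ω - z.re by linarith) hRpos]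

section Equiv
variable (N : ℕ)

abbrev BigT (N : ℕ) := (Unit ⊕ Fin N) ⊕ ((Unit ⊕ Fin N) ⊕ (Fin 2 ⊕ Fin 4))

def bigTo : (Fin 4 ⊕ Fin 4 ⊕ Fin (2 * N)) → BigT N := fun p =>
  match p with
  | .inl i =>
      (![Sum.inr (Sum.inr (Sum.inl 0)), Sum.inr (Sum.inr (Sum.inl 1)),
         Sum.inl (Sum.inl ()), Sum.inr (Sum.inl (Sum.inl ()))] : Fin 4 → BigT N) i
  | .inr (.inl i) => Sum.inr (Sum.inr (Sum.inr i))
  | .inr (.inr j) =>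
      if h : j.val % 2 = 0 then Sum.inl (Sum.inr ⟨j.val / 2, by omega⟩)
      else Sum.inr (Sum.inl (Sum.inr ⟨j.val / 2, by omega⟩))

def bigInv : BigT N → (Fin 4 ⊕ Fin 4 ⊕ Fin (2 * N)) := fun q =>
  match q with
  | .inl (.inl _) => Sum.inl 2
  | .inl (.inr l) => Sum.inr (Sum.inr ⟨2 * l.val, by omega⟩)
  | .inr (.inl (.inl _)) => Sum.inl 3
  | .inr (.inl (.inr l)) => Sum.inr (Sum.inr ⟨2 * l.val + 1, by omega⟩)
  | .inr (.inr (.inl i)) => Sum.inl ⟨i.val, by omega⟩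
  | .inr (.inr (.inr i)) => Sum.inr (Sum.inl i)

def bigEquiv : (Fin 4 ⊕ Fin 4 ⊕ Fin (2 * N)) ≃ BigT N where
  toFun := bigTo N
  invFun := bigInv N
  left_inv := by
    rintro (i | i | j)
    · fin_cases i <;> rfl
    · rfl
    · by_cases h : j.val % 2 = 0
      · simp only [bigTo, h, dif_pos, bigInv]
        simp only [Sum.inl.injEq, Sum.inr.injEq, Fin.ext_iff]
        omega
      · simp only [bigTo, h, dif_neg, bigInv, not_false_iff]
        simp only [Sum.inl.injEq, Sum.inr.injEq, Fin.ext_iff]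
        omega
  right_inv := by
    rintro ((_ | l) | ((_ | l) | (i | i)))
    · rfl
    · simp only [bigInv, bigTo]
      rw [dif_pos (by omega)]
      simp only [Sum.inl.injEq, Sum.inr.injEq, Fin.ext_iff]
      omega
    · rfl
    · simp only [bigInv, bigTo]
      rw [dif_neg (by omega)]
      congr 1
      simp only [Sum.inl.injEq, Sum.inr.injEq, Fin.ext_iff]
      omega
    · fin_cases i <;> rfl
    · rfl

end Equiv

@[simp] lemma pairIdx_even (N : ℕ) (l : Fin N) (h : 2 * l.val < 2 * N) :
    pairIdx N ⟨2 * l.val, h⟩ = l := Fin.ext (by simp only [pairIdx]; omega)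

@[simp] lemma pairIdx_odd (N : ℕ) (l : Fin N) (h : 2 * l.val + 1 < 2 * N) :
    pairIdx N ⟨2 * l.val + 1, h⟩ = l := Fin.ext (by simp only [pairIdx]; omega)

@[simp] lemma mod2_even (l : ℕ) : 2 * l % 2 = 0 := by omega
@[simp] lemma mod2_odd (l : ℕ) : (2 * l + 1) % 2 = 1 := by omega

section Factor
variable (N : ℕ) (ρ ρf γ1 γ3 Ω1 Ω3 : ℝ) (θ1 θ3 a1 a3 : Fin N → ℝ)

noncomputable abbrev McM : Matrix (Fin 4 ⊕ Fin 4 ⊕ Fin (2 * N)) (Fin 4 ⊕ Fin 4 ⊕ Fin (2 * N)) ℂ :=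
  (SBiotDA N ρ ρf γ1 γ3 Ω1 Ω3 θ1 θ3 a1 a3).map (Complex.ofReal)

noncomputable abbrev A1M := AcoreC N Ω1 (fun l => γ1 * a1 l) (fun l => θ1 l + Ω1)
noncomputable abbrev A3M := AcoreC N Ω3 (fun l => γ3 * a3 l) (fun l => θ3 l + Ω3)

set_option maxHeartbeats 1600000 in
lemma charpoly_factor :
    (McM N ρ ρf γ1 γ3 Ω1 Ω3 θ1 θ3 a1 a3).charpoly =
      (A1M N γ1 Ω1 θ1 a1).charpoly * ((A3M N γ3 Ω3 θ3 a3).charpoly * X ^ 6) := by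
  have hsymm : ∀ q, (bigEquiv N).symm q = bigInv N q := fun _ => rfl
  have hM : (Matrix.reindex (bigEquiv N) (bigEquiv N)) (McM N ρ ρf γ1 γ3 Ω1 Ω3 θ1 θ3 a1 a3) =
      Matrix.fromBlocks (A1M N γ1 Ω1 θ1 a1) 0
        (Matrix.of fun i j => (McM N ρ ρf γ1 γ3 Ω1 Ω3 θ1 θ3 a1 a3) (bigInv N (Sum.inr i)) (bigInv N (Sum.inl j)))
        (Matrix.fromBlocks (A3M N γ3 Ω3 θ3 a3) 0
          (Matrix.of fun i j => (McM N ρ ρf γ1 γ3 Ω1 Ω3 θ1 θ3 a1 a3) (bigInv N (Sum.inr (Sum.inr i))) (bigInv N (Sum.inr (Sum.inl j)))) 0) := by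
    ext i j
    simp only [Matrix.reindex_apply, Matrix.submatrix_apply, hsymm]
    rcases i with (iu | il) | ((iu3 | il3) | (i2 | i4)) <;>
      rcases j with (ju | jl) | ((ju3 | jl3) | (j2 | j4)) <;>
      simp only [bigInv, Matrix.fromBlocks_apply₁₁, Matrix.fromBlocks_apply₁₂,
        Matrix.fromBlocks_apply₂₁, Matrix.fromBlocks_apply₂₂, Matrix.map_apply, McM, Matrix.of_apply,
        SBiotDA, AcoreC, S1blk, S2blk, S3blk, Matrix.zero_apply,
        pairIdx_even, pairIdx_odd, mod2_even, mod2_odd]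
    all_goals norm_num
    all_goals try simp [Fin.val_inj]
    all_goals try (intro h; exact absurd h (by omega))
    all_goals try (split_ifs <;> push_cast <;> ring)
    all_goals try (intro h; have hv := congrArg Fin.val h; simp at hv; omega)
  rw [← Matrix.charpoly_reindex (bigEquiv N), hM, Matrix.charpoly_fromBlocks_zero₁₂,
    Matrix.charpoly_fromBlocks_zero₁₂]
  refine congrArg (_ * ·) (congrArg (_ * ·) ?_)
  have : (0 : Matrix (Fin 2 ⊕ Fin 4) (Fin 2 ⊕ Fin 4) ℂ).charpoly = X ^ 6 := by
    rw [Matrix.charpoly]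
    have hc : charmatrix (0 : Matrix (Fin 2 ⊕ Fin 4) (Fin 2 ⊕ Fin 4) ℂ) =
        Matrix.diagonal (fun _ => (X : ℂ[X])) := by
      ext i j
      by_cases h : i = j <;> simp [charmatrix_apply, Matrix.diagonal, h]
    rw [hc, Matrix.det_diagonal]
    simp [Finset.prod_const]
  rw [this]
end Factor

theorem SBiotDA_spectrum (N : ℕ) (hN : 1 ≤ N)
    (ρ ρf γ1 γ3 Ω1 Ω3 : ℝ) (θ1 θ3 a1 a3 : Fin N → ℝ)
    (hρf : 0 < ρf) (hρ : ρf < ρ)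
    (hγ1 : 0 < γ1) (hγ3 : 0 < γ3) (hΩ1 : 0 < Ω1) (hΩ3 : 0 < Ω3)
    (hθ1 : ∀ ℓ, 0 < θ1 ℓ) (hθ3 : ∀ ℓ, 0 < θ3 ℓ)
    (ha1 : ∀ ℓ, 0 < a1 ℓ) (ha3 : ∀ ℓ, 0 < a3 ℓ) :
    ((SBiotDA N ρ ρf γ1 γ3 Ω1 Ω3 θ1 θ3 a1 a3).map (Complex.ofReal)).charpoly.rootMultiplicity 0
        = 6 ∧
    ∀ z : ℂ,
      ((SBiotDA N ρ ρf γ1 γ3 Ω1 Ω3 θ1 θ3 a1 a3).map (Complex.ofReal)).charpoly.IsRoot z →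
        z ≠ 0 → ∃ x : ℝ, 0 < x ∧ z = (x : ℂ) := by
  constructor
  · -- multiplicity of the zero eigenvalue
    rw [show (SBiotDA N ρ ρf γ1 γ3 Ω1 Ω3 θ1 θ3 a1 a3).map (Complex.ofReal) =
        McM N ρ ρf γ1 γ3 Ω1 Ω3 θ1 θ3 a1 a3 from rfl,
      charpoly_factor N ρ ρf γ1 γ3 Ω1 Ω3 θ1 θ3 a1 a3]
    have h1 : (A1M N γ1 Ω1 θ1 a1).charpoly ≠ 0 := (Matrix.charpoly_monic _).ne_zero
    have h3 : (A3M N γ3 Ω3 θ3 a3).charpoly ≠ 0 := (Matrix.charpoly_monic _).ne_zero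
    have hX : ((X : ℂ[X]) ^ 6) ≠ 0 := pow_ne_zero _ X_ne_zero
    have hroot1 : ¬ (A1M N γ1 Ω1 θ1 a1).charpoly.IsRoot 0 := by
      intro h
      obtain ⟨v, hv, heig⟩ := (isRoot_charpoly_iff _ _).mp h
      obtain ⟨x, hx, hzx⟩ := AcoreC_eig hN Ω1 (fun l => γ1 * a1 l) (fun l => θ1 l + Ω1)
        hΩ1 (fun l => mul_pos hγ1 (ha1 l)) (fun l => by have := hθ1 l; show Ω1 < θ1 l + Ω1; linarith) 0 v hv heig
      have : x = 0 := by exact_mod_cast hzx.symm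
      linarith
    have hroot3 : ¬ (A3M N γ3 Ω3 θ3 a3).charpoly.IsRoot 0 := by
      intro h
      obtain ⟨v, hv, heig⟩ := (isRoot_charpoly_iff _ _).mp h
      obtain ⟨x, hx, hzx⟩ := AcoreC_eig hN Ω3 (fun l => γ3 * a3 l) (fun l => θ3 l + Ω3)
        hΩ3 (fun l => mul_pos hγ3 (ha3 l)) (fun l => by have := hθ3 l; show Ω3 < θ3 l + Ω3; linarith) 0 v hv heig
      have : x = 0 := by exact_mod_cast hzx.symm
      linarith
    rw [Polynomial.rootMultiplicity_mul (mul_ne_zero h1 (mul_ne_zero h3 hX)),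
      Polynomial.rootMultiplicity_mul (mul_ne_zero h3 hX),
      Polynomial.rootMultiplicity_eq_zero hroot1,
      Polynomial.rootMultiplicity_eq_zero hroot3]
    have hX6 : Polynomial.rootMultiplicity (0 : ℂ) (X ^ 6) = 6 := by
      have h := Polynomial.rootMultiplicity_X_sub_C_pow (0 : ℂ) 6
      simpa using h
    rw [hX6]
  · -- nonzero roots are positive reals
    intro z hroot hz0
    rw [show (SBiotDA N ρ ρf γ1 γ3 Ω1 Ω3 θ1 θ3 a1 a3).map (Complex.ofReal) =
        McM N ρ ρf γ1 γ3 Ω1 Ω3 θ1 θ3 a1 a3 from rfl,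
      charpoly_factor N ρ ρf γ1 γ3 Ω1 Ω3 θ1 θ3 a1 a3] at hroot
    rw [Polynomial.IsRoot, Polynomial.eval_mul, Polynomial.eval_mul, Polynomial.eval_pow,
      Polynomial.eval_X] at hroot
    rcases mul_eq_zero.mp hroot with h | h
    · obtain ⟨v, hv, heig⟩ := (isRoot_charpoly_iff _ _).mp h
      exact AcoreC_eig hN Ω1 (fun l => γ1 * a1 l) (fun l => θ1 l + Ω1)
        hΩ1 (fun l => mul_pos hγ1 (ha1 l)) (fun l => by have := hθ1 l; show Ω1 < θ1 l + Ω1; linarith) z v hv heig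
    · rcases mul_eq_zero.mp h with h' | h'
      · obtain ⟨v, hv, heig⟩ := (isRoot_charpoly_iff _ _).mp h'
        exact AcoreC_eig hN Ω3 (fun l => γ3 * a3 l) (fun l => θ3 l + Ω3)
          hΩ3 (fun l => mul_pos hγ3 (ha3 l)) (fun l => by have := hθ3 l; show Ω3 < θ3 l + Ω3; linarith) z v hv heig
      · exact absurd (pow_eq_zero_iff (by norm_num) |>.mp h') hz0
end
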